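/- Let n ≥ 2 and σ ∈ (0,2). Let Γ : ℝ^n → ℝ be bounded and Lebesgue measurable with Γ ≤ 0 everywhere, Γ = 0 outside the closed ball of radius 3 centered at the origin, and Γ < 0 on a set of positive Lebesgue measure. Let P := Γ * K_{2−σ}. If at a point x ∈ ℝ^n the function P admits a second-order Taylor expansion, i.e. there exist a vector p ∈ ℝ^n and a symmetric n×n matrix H with P(x+y) = P(x) + ⟨p,y⟩ + ½ yᵀH y + o(|y|²) as y → 0, and H is positive semidefinite, then |x| ≤ 3. -/

import Mathlib

open MeasureTheory Filter Asymptotics Topology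

noncomputable section

/-- The constant `A(n,α) = π^{α - n/2} Γ((n-α)/2) / Γ(α/2)`. -/
def rieszA (n : ℕ) (α : ℝ) : ℝ :=
  Real.pi ^ (α - (n : ℝ) / 2) * Real.Gamma (((n : ℝ) - α) / 2) / Real.Gamma (α / 2)

/-- The Riesz kernel of order `2 - σ`: `K_{2-σ}(y) = A(n,2-σ)·|y|^{-n+2-σ}`. -/
def rieszKernel (n : ℕ) (σ : ℝ) (y : EuclideanSpace ℝ (Fin n)) : ℝ :=
  rieszA n (2 - σ) * ‖y‖ ^ (-(n : ℝ) + 2 - σ)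

/-- The Riesz potential `P = Γ * K_{2-σ}` (convolution over `ℝⁿ`). -/
def rieszPotential (n : ℕ) (σ : ℝ) (Γ : EuclideanSpace ℝ (Fin n) → ℝ)
    (x : EuclideanSpace ℝ (Fin n)) : ℝ :=
  ∫ y : EuclideanSpace ℝ (Fin n), Γ y * rieszKernel n σ (x - y)

/-! ### Auxiliary lemmas -/

private lemma rpow_sq_aux (x γ : ℝ) (hx : 0 ≤ x) : (x ^ 2) ^ γ = x ^ (2 * γ) := by
  rw [← Real.rpow_natCast x 2, ← Real.rpow_mul hx]; norm_num

private def sder (n : ℕ) (A α : ℝ) (i : Fin n) (w : EuclideanSpace ℝ (Fin n)) : ℝ :=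
  A * α * ((α - 2) * ‖w‖ ^ (α - 4) * (w i) ^ 2 + ‖w‖ ^ (α - 2))

private lemma norm_add_single_sq (n : ℕ) (z : EuclideanSpace ℝ (Fin n)) (i : Fin n) (s : ℝ) :
    ‖z + s • EuclideanSpace.single i (1:ℝ)‖ ^ 2 = ‖z‖ ^ 2 + 2 * s * z i + s ^ 2 := by
  rw [norm_add_sq_real, real_inner_smul_right, EuclideanSpace.inner_single_right,
    norm_smul, EuclideanSpace.norm_single]
  simp [mul_pow]; ring

private def qf (n : ℕ) (z : EuclideanSpace ℝ (Fin n)) (i : Fin n) (s : ℝ) : ℝ :=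
  ‖z‖ ^ 2 + 2 * s * z i + s ^ 2

private def u1 (n : ℕ) (A α : ℝ) (z : EuclideanSpace ℝ (Fin n)) (i : Fin n) (s : ℝ) : ℝ :=
  A * (α / 2) * (qf n z i s) ^ (α / 2 - 1) * (2 * z i + 2 * s)

private lemma qf_eq (n : ℕ) (z : EuclideanSpace ℝ (Fin n)) (i : Fin n) (s : ℝ) :
    qf n z i s = ‖z + s • EuclideanSpace.single i (1:ℝ)‖ ^ 2 :=
  (norm_add_single_sq n z i s).symm

private lemma qf_pos (n : ℕ) (z : EuclideanSpace ℝ (Fin n)) (i : Fin n) (s : ℝ)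
    (h : z + s • EuclideanSpace.single i (1:ℝ) ≠ 0) : 0 < qf n z i s := by
  rw [qf_eq]; exact pow_pos (norm_pos_iff.mpr h) 2

private lemma hasDerivAt_qf (n : ℕ) (z : EuclideanSpace ℝ (Fin n)) (i : Fin n) (s : ℝ) :
    HasDerivAt (qf n z i) (2 * z i + 2 * s) s := by
  have h1 : HasDerivAt (fun s : ℝ => ‖z‖ ^ 2 + 2 * s * z i + s ^ 2)
      (0 + 2 * z i + 2 * s) s := by
    have ha : HasDerivAt (fun s : ℝ => 2 * s * z i) (2 * z i) s := by
      simpa [mul_comm, mul_assoc, mul_left_comm] using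
        (hasDerivAt_id s).const_mul (2 * z i)
    have hb : HasDerivAt (fun s : ℝ => s ^ 2) (2 * s) s := by
      simpa using hasDerivAt_pow 2 s
    exact ((hasDerivAt_const s (‖z‖ ^ 2)).add ha).add hb
  unfold qf; simpa using h1

private lemma kernel_line_eq (n : ℕ) (A α : ℝ) (z : EuclideanSpace ℝ (Fin n)) (i : Fin n)
    (s : ℝ) : A * ‖z + s • EuclideanSpace.single i (1:ℝ)‖ ^ α = A * (qf n z i s) ^ (α / 2) := by
  rw [qf_eq, rpow_sq_aux _ _ (norm_nonneg _)]
  congr 1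
  ring

private lemma hasDerivAt_kl1 (n : ℕ) (A α : ℝ) (z : EuclideanSpace ℝ (Fin n)) (i : Fin n)
    (s : ℝ) (hs : z + s • EuclideanSpace.single i (1:ℝ) ≠ 0) :
    HasDerivAt (fun s => A * ‖z + s • EuclideanSpace.single i (1:ℝ)‖ ^ α)
      (u1 n A α z i s) s := by
  have hq := hasDerivAt_qf n z i s
  have hr : HasDerivAt (fun u : ℝ => u ^ (α / 2)) ((α/2) * (qf n z i s) ^ (α/2 - 1))
      (qf n z i s) := Real.hasDerivAt_rpow_const (Or.inl (qf_pos n z i s hs).ne')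
  have h := (hr.comp s hq).const_mul A
  have heq : (fun s => A * ‖z + s • EuclideanSpace.single i (1:ℝ)‖ ^ α)
      = fun s => A * (qf n z i s) ^ (α / 2) := funext fun s => kernel_line_eq n A α z i s
  rw [heq]
  convert h using 1 <;> try rfl
  rw [u1]; ring

private lemma hasDerivAt_kl2 (n : ℕ) (A α : ℝ) (z : EuclideanSpace ℝ (Fin n)) (i : Fin n)
    (s : ℝ) (hs : z + s • EuclideanSpace.single i (1:ℝ) ≠ 0) :
    HasDerivAt (u1 n A α z i)
      (sder n A α i (z + s • EuclideanSpace.single i (1:ℝ))) s := by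
  have hq := hasDerivAt_qf n z i s
  have hqpos := qf_pos n z i s hs
  have hr : HasDerivAt (fun u : ℝ => u ^ (α / 2 - 1))
      ((α/2 - 1) * (qf n z i s) ^ (α/2 - 1 - 1)) (qf n z i s) :=
    Real.hasDerivAt_rpow_const (Or.inl hqpos.ne')
  have h1 : HasDerivAt (fun s => (qf n z i s) ^ (α / 2 - 1))
      ((α/2 - 1) * (qf n z i s) ^ (α/2 - 1 - 1) * (2 * z i + 2 * s)) s := hr.comp s hq
  have h2 : HasDerivAt (fun s : ℝ => 2 * z i + 2 * s) 2 s := by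
    simpa using ((hasDerivAt_id s).const_mul 2).const_add (2 * z i)
  have h3 := ((h1.const_mul (A * (α/2))).mul h2)
  have heq : u1 n A α z i
      = fun s => A * (α/2) * (qf n z i s) ^ (α / 2 - 1) * (2 * z i + 2 * s) := rfl
  rw [heq]
  convert h3 using 1 <;> try rfl
  set w := z + s • EuclideanSpace.single i (1:ℝ) with hw
  have hq2 : qf n z i s = ‖w‖ ^ 2 := qf_eq n z i s
  have hwi : w i = z i + s := by
    simp [hw, EuclideanSpace.single_apply]
  have e1 : (qf n z i s) ^ (α/2 - 1) = ‖w‖ ^ (α - 2) := by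
    rw [hq2, rpow_sq_aux _ _ (norm_nonneg _)]; ring_nf
  have e2 : (qf n z i s) ^ (α/2 - 1 - 1) = ‖w‖ ^ (α - 4) := by
    rw [hq2, rpow_sq_aux _ _ (norm_nonneg _)]; ring_nf
  rw [sder, e1, e2, hwi]
  ring

private lemma convex_aux (f f' f'' : ℝ → ℝ) (t : ℝ) (ht : 0 ≤ t)
    (hd1 : ∀ s ∈ Set.Icc 0 t, HasDerivAt f (f' s) s)
    (hd2 : ∀ s ∈ Set.Icc 0 t, HasDerivAt f' (f'' s) s)
    (h'0 : f' 0 = 0) (hpos : ∀ s ∈ Set.Icc 0 t, 0 ≤ f'' s) : f 0 ≤ f t := by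
  have hmono' : MonotoneOn f' (Set.Icc 0 t) := by
    apply monotoneOn_of_deriv_nonneg (convex_Icc 0 t)
    · exact fun s hs => (hd2 s hs).continuousAt.continuousWithinAt
    · intro s hs
      rw [interior_Icc] at hs
      exact ((hd2 s (Set.mem_Icc_of_Ioo hs)).differentiableAt).differentiableWithinAt
    · intro s hs
      rw [interior_Icc] at hs
      rw [(hd2 s (Set.mem_Icc_of_Ioo hs)).deriv]
      exact hpos s (Set.mem_Icc_of_Ioo hs)
  have h'nonneg : ∀ s ∈ Set.Icc 0 t, 0 ≤ f' s := fun s hs => by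
    calc (0:ℝ) = f' 0 := h'0.symm
    _ ≤ f' s := hmono' (Set.left_mem_Icc.2 ht) hs hs.1
  have hmono : MonotoneOn f (Set.Icc 0 t) := by
    apply monotoneOn_of_deriv_nonneg (convex_Icc 0 t)
    · exact fun s hs => (hd1 s hs).continuousAt.continuousWithinAt
    · intro s hs
      rw [interior_Icc] at hs
      exact ((hd1 s (Set.mem_Icc_of_Ioo hs)).differentiableAt).differentiableWithinAt
    · intro s hs
      rw [interior_Icc] at hs
      rw [(hd1 s (Set.mem_Icc_of_Ioo hs)).deriv]
      exact h'nonneg s (Set.mem_Icc_of_Ioo hs)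
  exact hmono (Set.left_mem_Icc.2 ht) (Set.right_mem_Icc.2 ht) ht

private lemma kernel_second_diff_lb (n : ℕ) (A α c t : ℝ) (z : EuclideanSpace ℝ (Fin n))
    (ht : 0 ≤ t)
    (hne : ∀ (i : Fin n) (s : ℝ), |s| ≤ t → z + s • EuclideanSpace.single i (1:ℝ) ≠ 0)
    (hΨ : ∀ s : ℝ, |s| ≤ t →
      c ≤ ∑ i, sder n A α i (z + s • EuclideanSpace.single i (1:ℝ))) :
    2 * (n:ℝ) * (A * ‖z‖ ^ α) + c * t ^ 2 ≤
      ∑ i, (A * ‖z + t • EuclideanSpace.single i (1:ℝ)‖ ^ α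
        + A * ‖z + (-t) • EuclideanSpace.single i (1:ℝ)‖ ^ α) := by
  have habs : ∀ s : ℝ, s ∈ Set.Icc 0 t → |s| ≤ t := fun s hs => by
    rw [abs_of_nonneg hs.1]; exact hs.2
  have habs' : ∀ s : ℝ, s ∈ Set.Icc 0 t → |(-s)| ≤ t := fun s hs => by
    rw [abs_neg, abs_of_nonneg hs.1]; exact hs.2
  have hnegderiv1 : ∀ (i : Fin n) (s : ℝ), s ∈ Set.Icc 0 t →
      HasDerivAt (fun s : ℝ => A * ‖z + (-s) • EuclideanSpace.single i (1:ℝ)‖ ^ α)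
        (-(u1 n A α z i (-s))) s := by
    intro i s hs
    have h0 := hasDerivAt_kl1 n A α z i (-s) (hne i (-s) (habs' s hs))
    have h := h0.comp s (hasDerivAt_neg s)
    simpa [Function.comp_def, neg_smul, mul_neg_one] using h
  have hnegderiv2 : ∀ (i : Fin n) (s : ℝ), s ∈ Set.Icc 0 t →
      HasDerivAt (fun s : ℝ => u1 n A α z i (-s))
        (sder n A α i (z + (-s) • EuclideanSpace.single i (1:ℝ)) * (-1)) s := by
    intro i s hs
    have h0 := hasDerivAt_kl2 n A α z i (-s) (hne i (-s) (habs' s hs))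
    have h := h0.comp s (hasDerivAt_neg s)
    simpa [Function.comp_def, neg_smul] using h
  have key := convex_aux
    (fun s => (∑ i, (A * ‖z + s • EuclideanSpace.single i (1:ℝ)‖ ^ α
        + A * ‖z + (-s) • EuclideanSpace.single i (1:ℝ)‖ ^ α)) - c * s ^ 2)
    (fun s => (∑ i, (u1 n A α z i s - u1 n A α z i (-s))) - c * (2 * s))
    (fun s => (∑ i, (sder n A α i (z + s • EuclideanSpace.single i (1:ℝ))
        + sder n A α i (z + (-s) • EuclideanSpace.single i (1:ℝ)))) - 2 * c)
    t ht ?_ ?_ ?_ ?_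
  · -- convert conclusion
    try dsimp only at key
    simp only [neg_zero, zero_smul, add_zero] at key
    have hsum : ∑ _i : Fin n, (A * ‖z‖ ^ α + A * ‖z‖ ^ α) = 2 * (n:ℝ) * (A * ‖z‖ ^ α) := by
      rw [Finset.sum_const, Finset.card_univ, Fintype.card_fin, nsmul_eq_mul]; ring
    rw [hsum] at key
    norm_num at key
    simp only [neg_smul]
    linarith [key]
  · -- hd1
    intro s hs
    apply HasDerivAt.sub
    · apply HasDerivAt.fun_sum
      intro i _
      exact (hasDerivAt_kl1 n A α z i s (hne i s (habs s hs))).add (hnegderiv1 i s hs)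
    · have h : HasDerivAt (fun s : ℝ => c * s ^ 2) (c * (2 * s)) s := by
        simpa using (hasDerivAt_pow 2 s).const_mul c
      exact h
  · -- hd2
    intro s hs
    apply HasDerivAt.sub
    · apply HasDerivAt.fun_sum
      intro i _
      have h := (hasDerivAt_kl2 n A α z i s (hne i s (habs s hs))).sub (hnegderiv2 i s hs)
      convert h using 1
      all_goals first | rfl | ring
    · have h : HasDerivAt (fun s : ℝ => c * (2 * s)) (2 * c) s := by
        have heq2 : (fun s : ℝ => c * (2 * s)) = fun s : ℝ => (2 * c) * s := by
          funext s; ring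
        rw [heq2]
        simpa using (hasDerivAt_id s).const_mul (2 * c)
      exact h
  · -- f' 0 = 0
    simp
  · -- f'' nonneg
    intro s hs
    try dsimp only
    rw [Finset.sum_add_distrib]
    have h1 := hΨ s (habs s hs)
    have h2 := hΨ (-s) (habs' s hs)
    linarith

private lemma sum_normsq (n : ℕ) (w : EuclideanSpace ℝ (Fin n)) :
    ∑ i, (w i) ^ 2 = ‖w‖ ^ 2 := by
  rw [EuclideanSpace.norm_eq]
  rw [Real.sq_sqrt (by positivity)]
  simp [sq_abs]

private lemma sum_sder (n : ℕ) (A α : ℝ) (w : EuclideanSpace ℝ (Fin n)) (hw : w ≠ 0) :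
    ∑ i, sder n A α i w = A * α * (α + n - 2) * ‖w‖ ^ (α - 2) := by
  have hwpos : 0 < ‖w‖ := norm_pos_iff.mpr hw
  have key : ‖w‖ ^ (α - 4) * ‖w‖ ^ 2 = ‖w‖ ^ (α - 2) := by
    rw [← Real.rpow_natCast ‖w‖ 2, ← Real.rpow_add hwpos]
    congr 1
    ring
  calc ∑ i, sder n A α i w
      = ∑ i : Fin n, (A * α * (α - 2) * ‖w‖ ^ (α - 4) * (w i) ^ 2 + A * α * ‖w‖ ^ (α - 2)) := by
        apply Finset.sum_congr rfl; intros; rw [sder]; ring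
    _ = A * α * (α - 2) * ‖w‖ ^ (α - 4) * (∑ i, (w i) ^ 2)
        + (n : ℝ) * (A * α * ‖w‖ ^ (α - 2)) := by
        rw [Finset.sum_add_distrib, ← Finset.mul_sum, Finset.sum_const, Finset.card_univ,
          Fintype.card_fin, nsmul_eq_mul]
    _ = A * α * (α + n - 2) * ‖w‖ ^ (α - 2) := by
        rw [sum_normsq]
        linear_combination (A * α * (α - 2)) * key

private lemma continuousOn_sder (n : ℕ) (A α : ℝ) (i : Fin n) :
    ContinuousOn (sder n A α i) {w : EuclideanSpace ℝ (Fin n) | w ≠ 0} := by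
  have hnorm : ∀ β : ℝ, ContinuousOn (fun w : EuclideanSpace ℝ (Fin n) => ‖w‖ ^ β)
      {w : EuclideanSpace ℝ (Fin n) | w ≠ 0} := by
    intro β
    apply ContinuousOn.rpow_const continuous_norm.continuousOn
    intro w hw
    exact Or.inl (norm_ne_zero_iff.mpr hw)
  have happly : Continuous (fun w : EuclideanSpace ℝ (Fin n) => w i) :=
    (EuclideanSpace.proj i).continuous
  exact ((continuousOn_const.mul
    (((continuousOn_const.mul (hnorm (α-4))).mul ((happly.continuousOn).pow 2)).add
      (hnorm (α-2)))))

private lemma integrable_aux (n : ℕ) (Γ g : EuclideanSpace ℝ (Fin n) → ℝ) (C M : ℝ)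
    (hm : Measurable Γ) (hC : ∀ z, |Γ z| ≤ C)
    (hsupp : ∀ z, z ∉ Metric.closedBall (0:EuclideanSpace ℝ (Fin n)) 3 → Γ z = 0)
    (hgm : Measurable g)
    (hgb : ∀ y ∈ Metric.closedBall (0:EuclideanSpace ℝ (Fin n)) 3, |g y| ≤ M) :
    Integrable (fun y => Γ y * g y) := by
  have hCnn : 0 ≤ C := le_trans (abs_nonneg _) (hC 0)
  have hvol : volume (Metric.closedBall (0:EuclideanSpace ℝ (Fin n)) 3) ≠ ⊤ :=
    (isCompact_closedBall (0:EuclideanSpace ℝ (Fin n)) 3).measure_lt_top.ne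
  have hmeas : Measurable fun y => Γ y * g y := hm.mul hgm
  have hio : IntegrableOn (fun y => Γ y * g y) (Metric.closedBall 0 3) volume := by
    apply Measure.integrableOn_of_bounded hvol hmeas.aestronglyMeasurable (M := C * M)
    filter_upwards [ae_restrict_mem measurableSet_closedBall] with y hy
    rw [Real.norm_eq_abs, abs_mul]
    exact mul_le_mul (hC y) (hgb y hy) (abs_nonneg _) hCnn
  have heq : (fun y => Γ y * g y)
      = Set.indicator (Metric.closedBall 0 3) (fun y => Γ y * g y) := by
    funext y
    by_cases hy : y ∈ Metric.closedBall (0:EuclideanSpace ℝ (Fin n)) 3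
    · rw [Set.indicator_of_mem hy]
    · rw [Set.indicator_of_notMem hy, hsupp y hy, zero_mul]
  rw [heq]
  exact hio.integrable_indicator measurableSet_closedBall

private lemma int_neg_aux (n : ℕ) (Γ : EuclideanSpace ℝ (Fin n) → ℝ) (C : ℝ)
    (hm : Measurable Γ) (hC : ∀ z, |Γ z| ≤ C) (hneg : ∀ z, Γ z ≤ 0)
    (hsupp : ∀ z, z ∉ Metric.closedBall (0:EuclideanSpace ℝ (Fin n)) 3 → Γ z = 0)
    (hpos : 0 < volume {z : EuclideanSpace ℝ (Fin n) | Γ z < 0}) :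
    ∫ y, Γ y < 0 := by
  have hint : Integrable Γ := by
    have := integrable_aux n Γ (fun _ => 1) C 1 hm hC hsupp measurable_const
      (fun y _ => by norm_num)
    simpa using this
  have hle : ∫ y, Γ y ≤ 0 := integral_nonpos hneg
  rcases lt_or_eq_of_le hle with h | h
  · exact h
  · exfalso
    have hnn : 0 ≤ fun y => -Γ y := fun y => neg_nonneg.mpr (hneg y)
    have h0 : ∫ y, -Γ y = 0 := by rw [integral_neg, h, neg_zero]
    have hae := (integral_eq_zero_iff_of_nonneg hnn hint.neg).mp h0
    have hnull : volume {z : EuclideanSpace ℝ (Fin n) | Γ z < 0} = 0 := by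
      have hsub : {z : EuclideanSpace ℝ (Fin n) | Γ z < 0}
          ⊆ {z : EuclideanSpace ℝ (Fin n) | ¬ ((fun y => -Γ y) z = (fun _ => (0:ℝ)) z)} := by
        intro z hz
        simp only [Set.mem_setOf_eq] at hz ⊢
        intro hz0
        nlinarith [hz]
      apply measure_mono_null hsub
      have hthis := hae
      rw [Filter.EventuallyEq, ae_iff] at hthis
      exact hthis
    rw [hnull] at hpos
    exact lt_irrefl _ hpos

set_option maxHeartbeats 2000000 in
/-- if the Riesz potential `P` admits a second-order Taylor expansion at `x`
with positive semidefinite Hessian, then `|x| ≤ 3`. -/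
theorem stmt3 (n : ℕ) (hn : 2 ≤ n) (σ : ℝ) (hσ : σ ∈ Set.Ioo (0 : ℝ) 2)
    (Γ : EuclideanSpace ℝ (Fin n) → ℝ)
    (hb : ∃ C : ℝ, ∀ z, |Γ z| ≤ C) (hm : Measurable Γ)
    (hneg : ∀ z, Γ z ≤ 0)
    (hsupp : ∀ z : EuclideanSpace ℝ (Fin n), z ∉ Metric.closedBall 0 3 → Γ z = 0)
    (hpos : 0 < volume {z : EuclideanSpace ℝ (Fin n) | Γ z < 0})
    (P : EuclideanSpace ℝ (Fin n) → ℝ) (hP : P = rieszPotential n σ Γ)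
    (x : EuclideanSpace ℝ (Fin n)) (p : EuclideanSpace ℝ (Fin n))
    (H : Matrix (Fin n) (Fin n) ℝ) (hHsymm : H.IsSymm)
    (hTaylor : (fun y : EuclideanSpace ℝ (Fin n) =>
        P (x + y) - P x - (∑ i, p i * y i) - (1 / 2) * ∑ i, ∑ j, H i j * y i * y j)
        =o[𝓝 (0 : EuclideanSpace ℝ (Fin n))] fun y => ‖y‖ ^ 2)
    (hHpsd : H.PosSemidef) :
    ‖x‖ ≤ 3 := by
  by_contra hx3
  push_neg at hx3
  obtain ⟨hσ0, hσ2⟩ := hσ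
  obtain ⟨C, hC⟩ := hb
  have hn2 : (2:ℝ) ≤ (n:ℝ) := by exact_mod_cast hn
  set α : ℝ := -(n:ℝ) + 2 - σ with hα
  set A : ℝ := rieszA n (2 - σ) with hA
  have hApos : 0 < A := by
    rw [hA, rieszA]
    apply div_pos
    · apply mul_pos (Real.rpow_pos_of_pos Real.pi_pos _)
      apply Real.Gamma_pos_of_pos; nlinarith
    · apply Real.Gamma_pos_of_pos; nlinarith
  have hαneg : α < 0 := by rw [hα]; linarith
  have hker : ∀ w : EuclideanSpace ℝ (Fin n), rieszKernel n σ w = A * ‖w‖ ^ α := fun w => rfl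
  set d : ℝ := ‖x‖ - 3 with hd
  have hdpos : 0 < d := by rw [hd]; linarith
  -- measurability and integrability of the pieces
  have hrpowm : Measurable fun r : ℝ => r ^ α := by measurability
  have hkermeas : ∀ x' : EuclideanSpace ℝ (Fin n),
      Measurable fun y : EuclideanSpace ℝ (Fin n) => A * ‖x' - y‖ ^ α := by
    intro x'
    apply measurable_const.mul
    exact hrpowm.comp ((continuous_const.sub continuous_id).norm.measurable)
  have hkerbd : ∀ x' : EuclideanSpace ℝ (Fin n), 3 + d/2 ≤ ‖x'‖ →
      ∀ y ∈ Metric.closedBall (0:EuclideanSpace ℝ (Fin n)) 3,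
      |A * ‖x' - y‖ ^ α| ≤ |A| * (d/2) ^ α := by
    intro x' hx' y hy
    have hy3 : ‖y‖ ≤ 3 := by
      rw [Metric.mem_closedBall, dist_zero_right] at hy
      exact hy
    have h1 : d/2 ≤ ‖x' - y‖ := by
      have hns := norm_sub_norm_le x' y
      linarith
    have h2 : ‖x' - y‖ ^ α ≤ (d/2) ^ α :=
      Real.rpow_le_rpow_of_nonpos (half_pos hdpos) h1 hαneg.le
    rw [abs_mul]
    apply mul_le_mul_of_nonneg_left _ (abs_nonneg A)
    rw [abs_of_nonneg (Real.rpow_nonneg (norm_nonneg _) α)]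
    exact h2
  have key_int : ∀ x' : EuclideanSpace ℝ (Fin n), 3 + d/2 ≤ ‖x'‖ →
      Integrable (fun y => Γ y * (A * ‖x' - y‖ ^ α)) := fun x' hx' =>
    integrable_aux n Γ _ C (|A| * (d/2) ^ α) hm hC hsupp (hkermeas x') (hkerbd x' hx')
  have hΓint : Integrable Γ := by
    have := integrable_aux n Γ (fun _ => 1) C 1 hm hC hsupp measurable_const
      (fun y _ => by norm_num)
    simpa using this
  set m : ℝ := ∫ y, Γ y with hmdef
  have hmneg : m < 0 := int_neg_aux n Γ C hm hC hneg hsupp hpos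
  have hPrep : ∀ x' : EuclideanSpace ℝ (Fin n),
      P x' = ∫ y, Γ y * (A * ‖x' - y‖ ^ α) := by
    intro x'
    rw [hP]
    rfl
  -- compactness / uniform continuity setup
  set Rm : ℝ := ‖x‖ + 3 with hRm
  set K : Set (EuclideanSpace ℝ (Fin n)) :=
    {z | d ≤ ‖z‖} ∩ Metric.closedBall 0 Rm with hK
  have hKcomp : IsCompact K := by
    apply IsCompact.of_isClosed_subset (isCompact_closedBall (0:EuclideanSpace ℝ (Fin n)) Rm)
    · exact (isClosed_le continuous_const continuous_norm).inter Metric.isClosed_closedBall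
    · exact Set.inter_subset_right
  set S : Set ((EuclideanSpace ℝ (Fin n)) × ℝ) := K ×ˢ Set.Icc (-(d/2)) (d/2) with hS
  have hScomp : IsCompact S := hKcomp.prod isCompact_Icc
  have hnorm_lb : ∀ (z : EuclideanSpace ℝ (Fin n)) (s : ℝ) (i : Fin n), d ≤ ‖z‖ → |s| ≤ d/2 →
      d/2 ≤ ‖z + s • EuclideanSpace.single i (1:ℝ)‖ := by
    intro z s i hz hs
    have hu : ‖s • EuclideanSpace.single i (1:ℝ)‖ = |s| := by
      rw [norm_smul, EuclideanSpace.norm_single, Real.norm_eq_abs, norm_one, mul_one]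
    have h1 : ‖z‖ ≤ ‖z + s • EuclideanSpace.single i (1:ℝ)‖
        + ‖s • EuclideanSpace.single i (1:ℝ)‖ := by
      have := norm_sub_le (z + s • EuclideanSpace.single i (1:ℝ))
        (s • EuclideanSpace.single i (1:ℝ))
      simpa using this
    rw [hu] at h1
    linarith
  set Ψ : ((EuclideanSpace ℝ (Fin n)) × ℝ) → ℝ :=
    fun zs => ∑ i, sder n A α i (zs.1 + zs.2 • EuclideanSpace.single i (1:ℝ)) with hΨdef
  have hΨcont : ContinuousOn Ψ S := by
    apply continuousOn_finset_sum
    intro i _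
    apply (continuousOn_sder n A α i).comp
      ((continuous_fst.add (continuous_snd.smul continuous_const)).continuousOn)
    intro zs hzs
    rw [hS, Set.mem_prod] at hzs
    obtain ⟨hz, hs⟩ := hzs
    have hzd : d ≤ ‖zs.1‖ := hz.1
    have hsd : |zs.2| ≤ d/2 := abs_le.mpr ⟨(Set.mem_Icc.mp hs).1, (Set.mem_Icc.mp hs).2⟩
    have := hnorm_lb zs.1 zs.2 i hzd hsd
    simp only [Set.mem_setOf_eq]
    intro h0
    rw [show zs.1 + zs.2 • EuclideanSpace.single i (1:ℝ) = 0 from h0, norm_zero] at this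
    linarith
  set B : ℝ := A * α * (α + (n:ℝ) - 2) with hB
  have hBpos : 0 < B := by
    have hprod : α * (α + (n:ℝ) - 2) = σ * ((n:ℝ) - 2 + σ) := by rw [hα]; ring
    have : B = A * (α * (α + (n:ℝ) - 2)) := by rw [hB]; ring
    rw [this, hprod]
    apply mul_pos hApos
    apply mul_pos hσ0
    nlinarith
  have hRmpos : 0 < Rm := by rw [hRm]; linarith
  set c₀ : ℝ := B * Rm ^ (α - 2) / 2 with hc₀
  have hc₀pos : 0 < c₀ := by
    rw [hc₀]
    positivity
  have hΨ0 : ∀ z ∈ K, 2 * c₀ ≤ Ψ (z, 0) := by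
    intro z hz
    have hzd : d ≤ ‖z‖ := hz.1
    have hzRm : ‖z‖ ≤ Rm := by
      have := hz.2
      rwa [Metric.mem_closedBall, dist_zero_right] at this
    have hzne : z ≠ 0 := by
      intro h0
      rw [h0, norm_zero] at hzd
      linarith
    have hzpos : 0 < ‖z‖ := norm_pos_iff.mpr hzne
    have hΨval : Ψ (z, 0) = B * ‖z‖ ^ (α - 2) := by
      rw [hΨdef]
      simp only [zero_smul, add_zero]
      exact sum_sder n A α z hzne
    rw [hΨval]
    have hrw : Rm ^ (α - 2) ≤ ‖z‖ ^ (α - 2) :=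
      Real.rpow_le_rpow_of_nonpos hzpos hzRm (by linarith)
    have := mul_le_mul_of_nonneg_left hrw hBpos.le
    rw [hc₀]
    linarith
  have hUC := hScomp.uniformContinuousOn_of_continuous hΨcont
  rw [Metric.uniformContinuousOn_iff] at hUC
  obtain ⟨δ, hδpos, hδ⟩ := hUC c₀ hc₀pos
  set t₀ : ℝ := min (d/2) (δ/2) with ht₀
  have ht₀pos : 0 < t₀ := lt_min (half_pos hdpos) (half_pos hδpos)
  have ht₀d : t₀ ≤ d/2 := min_le_left _ _
  have ht₀δ : t₀ ≤ δ/2 := min_le_right _ _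
  have hΨlow : ∀ z ∈ K, ∀ s : ℝ, |s| ≤ t₀ →
      c₀ ≤ ∑ i, sder n A α i (z + s • EuclideanSpace.single i (1:ℝ)) := by
    intro z hz s hs
    have hsd : |s| ≤ d/2 := le_trans hs ht₀d
    have h1 : (z, s) ∈ S := by
      rw [hS, Set.mem_prod]
      exact ⟨hz, Set.mem_Icc.mpr ⟨(abs_le.mp hsd).1, (abs_le.mp hsd).2⟩⟩
    have h2 : (z, (0:ℝ)) ∈ S := by
      rw [hS, Set.mem_prod]
      constructor
      · exact hz
      · rw [Set.mem_Icc]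
        constructor <;> linarith
    have hdist : dist (z, s) (z, (0:ℝ)) < δ := by
      rw [Prod.dist_eq]
      have : dist s (0:ℝ) = |s| := by rw [Real.dist_eq, sub_zero]
      rw [dist_self, this]
      rw [max_eq_right (abs_nonneg s)]
      calc |s| ≤ t₀ := hs
      _ ≤ δ/2 := ht₀δ
      _ < δ := by linarith
    have := hδ (z, s) h1 (z, (0:ℝ)) h2 hdist
    rw [Real.dist_eq] at this
    have habs := abs_lt.mp this
    have h0 := hΨ0 z hz
    have hΨs : (∑ i, sder n A α i (z + s • EuclideanSpace.single i (1:ℝ))) = Ψ (z, s) := rfl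
    rw [hΨs]
    linarith [habs.1, habs.2, h0]
  -- trace of H is nonnegative
  have htrH : 0 ≤ ∑ i, H i i := by
    apply Finset.sum_nonneg
    intro i _
    exact hHpsd.diag_nonneg
  -- Taylor expansion along the second differences
  set F : ℝ → ℝ := fun t =>
    (∑ i, (P (x + t • EuclideanSpace.single i (1:ℝ))
      + P (x + (-t) • EuclideanSpace.single i (1:ℝ)))) - 2 * (n:ℝ) * P x with hF
  have hcurve : ∀ v : EuclideanSpace ℝ (Fin n),
      Tendsto (fun t : ℝ => t • v) (𝓝 0) (𝓝 (0 : EuclideanSpace ℝ (Fin n))) := by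
    intro v
    have : Continuous fun t : ℝ => t • v := continuous_id.smul continuous_const
    simpa using this.tendsto 0
  have hsingle_apply : ∀ (i j : Fin n) (t : ℝ),
      (t • EuclideanSpace.single i (1:ℝ)) j = if j = i then t else 0 := by
    intro i j t
    simp [EuclideanSpace.single_apply]
  have hlin : ∀ (i : Fin n) (t : ℝ),
      ∑ j, p j * ((t • EuclideanSpace.single i (1:ℝ)) j) = t * p i := by
    intro i t
    simp only [hsingle_apply, mul_ite, mul_zero]
    simp [Finset.sum_ite_eq]
    ring
  have hquad : ∀ (i : Fin n) (t : ℝ),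
      ∑ j, ∑ k, H j k * ((t • EuclideanSpace.single i (1:ℝ)) j)
        * ((t • EuclideanSpace.single i (1:ℝ)) k) = t ^ 2 * H i i := by
    intro i t
    simp only [hsingle_apply, mul_ite, mul_zero, ite_mul, zero_mul]
    simp [Finset.sum_ite_eq]
    ring
  have hnormsq : ∀ (i : Fin n) (t : ℝ), ‖t • EuclideanSpace.single i (1:ℝ)‖ ^ 2 = t ^ 2 := by
    intro i t
    rw [norm_smul, EuclideanSpace.norm_single, Real.norm_eq_abs, norm_one, mul_one, sq_abs]
  have hoP : ∀ i : Fin n, (fun t : ℝ => P (x + t • EuclideanSpace.single i (1:ℝ)) - P x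
      - t * p i - (1/2) * (t ^ 2 * H i i)) =o[𝓝 (0:ℝ)] fun t => t ^ 2 := by
    intro i
    have h := hTaylor.comp_tendsto (hcurve (EuclideanSpace.single i (1:ℝ)))
    apply h.congr
    · intro t
      simp only [Function.comp_apply]
      rw [hlin i t, hquad i t]
    · intro t
      simp only [Function.comp_apply]
      exact hnormsq i t
  have hoM : ∀ i : Fin n, (fun t : ℝ => P (x + (-t) • EuclideanSpace.single i (1:ℝ)) - P x
      - (-t) * p i - (1/2) * (t ^ 2 * H i i)) =o[𝓝 (0:ℝ)] fun t => t ^ 2 := by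
    intro i
    have hnegt : Tendsto (fun t : ℝ => -t) (𝓝 (0:ℝ)) (𝓝 (0:ℝ)) := by
      simpa using (continuous_neg.tendsto (0:ℝ))
    have h := (hoP i).comp_tendsto hnegt
    apply h.congr
    · intro t
      simp only [Function.comp_apply]
      ring_nf
    · intro t
      simp only [Function.comp_apply]
      ring
  have hosum : (fun t : ℝ => F t - t ^ 2 * (∑ i, H i i)) =o[𝓝 (0:ℝ)] fun t => t ^ 2 := by
    have h := IsLittleO.fun_sum (fun i (_ : i ∈ Finset.univ) => (hoP i).add (hoM i))
    apply h.congr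
    · intro t
      rw [hF]
      dsimp only
      have hterm : ∀ i : Fin n,
          (P (x + t • EuclideanSpace.single i (1:ℝ)) - P x - t * p i - (1/2) * (t ^ 2 * H i i))
          + (P (x + (-t) • EuclideanSpace.single i (1:ℝ)) - P x - (-t) * p i
            - (1/2) * (t ^ 2 * H i i))
          = (P (x + t • EuclideanSpace.single i (1:ℝ))
            + P (x + (-t) • EuclideanSpace.single i (1:ℝ))) - 2 * P x - t ^ 2 * H i i :=
        fun i => by ring
      simp only [hterm]
      rw [Finset.sum_sub_distrib, Finset.sum_sub_distrib, Finset.sum_const, Finset.card_univ,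
        Fintype.card_fin, nsmul_eq_mul, ← Finset.mul_sum]
      ring
    · intro t; rfl
  -- choose the scale ε and the small time t
  set ε : ℝ := (-m) * c₀ / 4 with hε
  have hεpos : 0 < ε := by
    rw [hε]
    have : 0 < -m := by linarith
    positivity
  have hev := hosum.def hεpos
  rw [Metric.eventually_nhds_iff] at hev
  obtain ⟨δ', hδ'pos, hδ'⟩ := hev
  set t : ℝ := min t₀ (δ'/2) with htdef
  have htpos : 0 < t := lt_min ht₀pos (half_pos hδ'pos)
  have htt₀ : t ≤ t₀ := min_le_left _ _
  have htd2 : t ≤ d/2 := le_trans htt₀ ht₀d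
  have htδ' : dist t 0 < δ' := by
    rw [Real.dist_eq, sub_zero, abs_of_pos htpos]
    calc t ≤ δ'/2 := min_le_right _ _
    _ < δ' := by linarith
  -- Taylor lower bound for F t
  have hTb := hδ' htδ'
  rw [Real.norm_eq_abs, Real.norm_eq_abs] at hTb
  have hTb' := abs_le.mp hTb
  have habs_t2 : |t ^ 2| = t ^ 2 := abs_of_nonneg (sq_nonneg t)
  rw [habs_t2] at hTb'
  have hFlow : -(ε * t ^ 2) ≤ F t := by
    have h1 : 0 ≤ t ^ 2 * (∑ i, H i i) := mul_nonneg (sq_nonneg t) htrH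
    linarith [hTb'.1]
  -- Integral representation and upper bound for F t
  have hxnorm : ‖x‖ = 3 + d := by rw [hd]; ring
  have hshift_norm : ∀ (t' : ℝ) (i : Fin n), |t'| ≤ d/2 →
      3 + d/2 ≤ ‖x + t' • EuclideanSpace.single i (1:ℝ)‖ := by
    intro t' i ht'
    have hu : ‖t' • EuclideanSpace.single i (1:ℝ)‖ = |t'| := by
      rw [norm_smul, EuclideanSpace.norm_single, Real.norm_eq_abs, norm_one, mul_one]
    have h1 : ‖x‖ ≤ ‖x + t' • EuclideanSpace.single i (1:ℝ)‖
        + ‖t' • EuclideanSpace.single i (1:ℝ)‖ := by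
      have := norm_sub_le (x + t' • EuclideanSpace.single i (1:ℝ))
        (t' • EuclideanSpace.single i (1:ℝ))
      simpa using this
    rw [hu] at h1
    rw [hxnorm] at h1
    linarith
  have hInt1 : ∀ (t' : ℝ), |t'| ≤ d/2 → ∀ i : Fin n,
      Integrable (fun y => Γ y * (A * ‖(x - y) + t' • EuclideanSpace.single i (1:ℝ)‖ ^ α)) := by
    intro t' ht' i
    have heq : (fun y : EuclideanSpace ℝ (Fin n) =>
        Γ y * (A * ‖(x - y) + t' • EuclideanSpace.single i (1:ℝ)‖ ^ α))
        = fun y => Γ y * (A * ‖(x + t' • EuclideanSpace.single i (1:ℝ)) - y‖ ^ α) := by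
      funext y
      have harg : (x - y) + t' • EuclideanSpace.single i (1:ℝ)
          = (x + t' • EuclideanSpace.single i (1:ℝ)) - y := by abel
      rw [harg]
    rw [heq]
    exact key_int _ (hshift_norm t' i ht')
  have hIntx : Integrable (fun y => Γ y * (A * ‖x - y‖ ^ α)) := by
    apply key_int x
    rw [hxnorm]
    linarith
  have habs_t : |t| ≤ d/2 := by rw [abs_of_pos htpos]; exact htd2
  have habs_nt : |(-t)| ≤ d/2 := by rw [abs_neg]; exact habs_t
  set Gf : EuclideanSpace ℝ (Fin n) → ℝ := fun y =>
    (∑ i, (A * ‖(x - y) + t • EuclideanSpace.single i (1:ℝ)‖ ^ α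
      + A * ‖(x - y) + (-t) • EuclideanSpace.single i (1:ℝ)‖ ^ α))
    - 2 * (n:ℝ) * (A * ‖x - y‖ ^ α) with hGf
  have hGfeq : (fun y => Γ y * Gf y) = fun y =>
      (∑ i, (Γ y * (A * ‖(x - y) + t • EuclideanSpace.single i (1:ℝ)‖ ^ α)
        + Γ y * (A * ‖(x - y) + (-t) • EuclideanSpace.single i (1:ℝ)‖ ^ α)))
      - (2 * (n:ℝ)) * (Γ y * (A * ‖x - y‖ ^ α)) := by
    funext y
    rw [hGf]
    dsimp only
    rw [mul_sub, Finset.mul_sum]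
    simp only [mul_add]
    ring
  have hsumint : Integrable (fun y => ∑ i : Fin n,
      (Γ y * (A * ‖(x - y) + t • EuclideanSpace.single i (1:ℝ)‖ ^ α)
        + Γ y * (A * ‖(x - y) + (-t) • EuclideanSpace.single i (1:ℝ)‖ ^ α))) := by
    apply integrable_finset_sum
    intro i _
    exact (hInt1 t habs_t i).add (hInt1 (-t) habs_nt i)
  have hconstint : Integrable (fun y =>
      (2 * (n:ℝ)) * (Γ y * (A * ‖x - y‖ ^ α))) := hIntx.const_mul _
  have hIntG : Integrable (fun y => Γ y * Gf y) := by
    rw [hGfeq]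
    exact hsumint.sub hconstint
  have hsplit : ∀ (t' : ℝ), |t'| ≤ d/2 → ∀ i : Fin n,
      P (x + t' • EuclideanSpace.single i (1:ℝ))
      = ∫ y, Γ y * (A * ‖(x - y) + t' • EuclideanSpace.single i (1:ℝ)‖ ^ α) := by
    intro t' ht' i
    rw [hPrep (x + t' • EuclideanSpace.single i (1:ℝ))]
    congr 1
    funext y
    have harg : (x + t' • EuclideanSpace.single i (1:ℝ)) - y
        = (x - y) + t' • EuclideanSpace.single i (1:ℝ) := by abel
    rw [harg]
  have hInt1' : ∀ i : Fin n, Integrable (fun y =>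
      Γ y * (A * ‖(x - y) + t • EuclideanSpace.single i (1:ℝ)‖ ^ α)
      + Γ y * (A * ‖(x - y) + (-t) • EuclideanSpace.single i (1:ℝ)‖ ^ α)) :=
    fun i => (hInt1 t habs_t i).add (hInt1 (-t) habs_nt i)
  have hFeq : F t = ∫ y, Γ y * Gf y := by
    rw [hGfeq, integral_sub hsumint hconstint,
      integral_finset_sum _ (fun i _ => hInt1' i),
      integral_const_mul]
    rw [hF]
    dsimp only
    have hs1 : ∀ i : Fin n, P (x + t • EuclideanSpace.single i (1:ℝ))
        + P (x + (-t) • EuclideanSpace.single i (1:ℝ))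
        = ∫ y, (Γ y * (A * ‖(x - y) + t • EuclideanSpace.single i (1:ℝ)‖ ^ α)
          + Γ y * (A * ‖(x - y) + (-t) • EuclideanSpace.single i (1:ℝ)‖ ^ α)) := by
      intro i
      rw [integral_add (hInt1 t habs_t i) (hInt1 (-t) habs_nt i),
        hsplit t habs_t i, hsplit (-t) habs_nt i]
    simp only [hs1]
    rw [hPrep x]
  -- pointwise comparison
  have hpt : ∀ y : EuclideanSpace ℝ (Fin n), Γ y * Gf y ≤ Γ y * (c₀ * t ^ 2) := by
    intro y
    by_cases hy : y ∈ Metric.closedBall (0:EuclideanSpace ℝ (Fin n)) 3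
    · have hy3 : ‖y‖ ≤ 3 := by rwa [Metric.mem_closedBall, dist_zero_right] at hy
      have hzK : (x - y) ∈ K := by
        constructor
        · have := norm_sub_norm_le x y
          simp only [Set.mem_setOf_eq]
          rw [hd]
          linarith
        · rw [Metric.mem_closedBall, dist_zero_right]
          have := norm_sub_le x y
          rw [hRm]
          linarith
      have hzd : d ≤ ‖x - y‖ := hzK.1
      have hne : ∀ (i : Fin n) (s : ℝ), |s| ≤ t →
          (x - y) + s • EuclideanSpace.single i (1:ℝ) ≠ 0 := by
        intro i s hs
        have hsd : |s| ≤ d/2 := le_trans hs htd2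
        have := hnorm_lb (x - y) s i hzd hsd
        intro h0
        rw [h0, norm_zero] at this
        linarith
      have hΨt : ∀ s : ℝ, |s| ≤ t →
          c₀ ≤ ∑ i, sder n A α i ((x - y) + s • EuclideanSpace.single i (1:ℝ)) := by
        intro s hs
        exact hΨlow (x - y) hzK s (le_trans hs htt₀)
      have hlb := kernel_second_diff_lb n A α c₀ t (x - y) htpos.le hne hΨt
      have hGlb : c₀ * t ^ 2 ≤ Gf y := by
        rw [hGf]
        dsimp only
        linarith
      exact mul_le_mul_of_nonpos_left hGlb (hneg y)
    · rw [hsupp y hy]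
      simp
  have hIntRHS : Integrable (fun y => Γ y * (c₀ * t ^ 2)) := hΓint.mul_const _
  have hFup : F t ≤ m * (c₀ * t ^ 2) := by
    rw [hFeq]
    calc ∫ y, Γ y * Gf y ≤ ∫ y, Γ y * (c₀ * t ^ 2) := integral_mono hIntG hIntRHS hpt
    _ = m * (c₀ * t ^ 2) := by rw [integral_mul_const]
  -- final contradiction
  have hmc : m * (c₀ * t ^ 2) = -(4 * ε) * t ^ 2 := by rw [hε]; ring
  rw [hmc] at hFup
  have ht2pos : 0 < t ^ 2 := pow_pos htpos 2
  nlinarith [hFlow, hFup, mul_pos hεpos ht2pos]
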